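/- Let W = {λ < κ : cof(λ) = ω}. If A ⊆ L \ {λ+1 : λ ∈ W} (where L = {λ+1 : λ a limit ordinal}) and B(A) = {α−1 : α ∈ A} is stationary, then A does not belong to the pleasant closure of the ideal generated by I_κ ∪ {W}. -/

import Mathlib

open Set

namespace PaperIdeals

/-- Diagonal union of a family `X` indexed by a set `A` of ordinals. -/
def diagU (A : Set Ordinal.{0}) (X : Ordinal.{0} → Set Ordinal.{0}) : Set Ordinal.{0} :=
  {ξ | ∃ α < ξ, α ∈ A ∧ ξ ∈ X α}

/-- `X` is bounded below `κ`. -/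
def BddIn (κ : Cardinal.{0}) (X : Set Ordinal.{0}) : Prop := ∃ θ < κ.ord, X ⊆ Iio θ

/-- `J` is a `<κ`-complete ideal on `κ` containing all singletons,
closed under subsets and (finite and small) unions. -/
def IsIdeal (κ : Cardinal.{0}) (J : Set Ordinal.{0} → Prop) : Prop :=
  (∀ X, J X → X ⊆ Iio κ.ord) ∧
  (∀ X Y, J X → Y ⊆ X → J Y) ∧
  (∀ X Y, J X → J Y → J (X ∪ Y)) ∧
  (∀ ξ < κ.ord, J {ξ}) ∧
  (∀ θ : Ordinal.{0}, θ.card < κ → ∀ X : Ordinal.{0} → Set Ordinal.{0},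
    (∀ α, J (X α)) → J (⋃ α ∈ Iio θ, X α))

def Proper (κ : Cardinal.{0}) (J : Set Ordinal.{0} → Prop) : Prop := ¬ J (Iio κ.ord)

/-- The coideal `I⁺`. -/
def Pos (κ : Cardinal.{0}) (J : Set Ordinal.{0} → Prop) (X : Set Ordinal.{0}) : Prop :=
  X ⊆ Iio κ.ord ∧ ¬ J X

/-- The dual filter `I*`. -/
def Dual (κ : Cardinal.{0}) (J : Set Ordinal.{0} → Prop) (X : Set Ordinal.{0}) : Prop :=
  X ⊆ Iio κ.ord ∧ J (Iio κ.ord \ X)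

/-- The restriction `I ↾ A`. -/
def restrict (κ : Cardinal.{0}) (J : Set Ordinal.{0} → Prop) (A : Set Ordinal.{0})
    (X : Set Ordinal.{0}) : Prop :=
  X ⊆ Iio κ.ord ∧ J (X ∩ A)

/-- Pleasant: closed under diagonal unions indexed by sets in the ideal. -/
def Pleasant (J : Set Ordinal.{0} → Prop) : Prop :=
  ∀ A, J A → ∀ X : Ordinal.{0} → Set Ordinal.{0}, (∀ α, J (X α)) → J (diagU A X)

/-- Prepleasant: closed under diagonal unions of bounded sets indexed by sets in the ideal. -/
def Prepleasant (κ : Cardinal.{0}) (J : Set Ordinal.{0} → Prop) : Prop :=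
  ∀ Q, J Q → ∀ B : Ordinal.{0} → Set Ordinal.{0}, (∀ α, BddIn κ (B α)) → J (diagU Q B)

/-- Normal: closed under full `κ`-indexed diagonal unions. -/
def Normal (κ : Cardinal.{0}) (J : Set Ordinal.{0} → Prop) : Prop :=
  ∀ X : Ordinal.{0} → Set Ordinal.{0}, (∀ α, J (X α)) → J (diagU (Iio κ.ord) X)

/-- Quasinormal ideal. -/
def Quasinormal (κ : Cardinal.{0}) (J : Set Ordinal.{0} → Prop) : Prop :=
  ∀ X : Ordinal.{0} → Set Ordinal.{0}, (∀ α, J (X α)) →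
    ∃ Q, Dual κ J Q ∧ J (diagU Q X)

/-- Club subset of `κ`: unbounded in `κ.ord` and closed under limits. -/
def IsClubIn (κ : Cardinal.{0}) (C : Set Ordinal.{0}) : Prop :=
  C ⊆ Iio κ.ord ∧ (∀ α < κ.ord, ∃ β ∈ C, α < β) ∧
  (∀ δ < κ.ord, Order.IsSuccLimit δ → (∀ α < δ, ∃ β ∈ C, α < β ∧ β < δ) → δ ∈ C)

/-- Stationary subset of `κ`. -/
def StatIn (κ : Cardinal.{0}) (S : Set Ordinal.{0}) : Prop :=
  S ⊆ Iio κ.ord ∧ ∀ C, IsClubIn κ C → (S ∩ C).Nonempty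

/-- The nonstationary ideal `NS κ`. -/
def NS (κ : Cardinal.{0}) (X : Set Ordinal.{0}) : Prop :=
  X ⊆ Iio κ.ord ∧ ∃ C, IsClubIn κ C ∧ X ∩ C = ∅

/-- Membership in the ideal generated by a family `S`. -/
def genIdeal (κ : Cardinal.{0}) (S : Set Ordinal.{0} → Prop) (X : Set Ordinal.{0}) : Prop :=
  ∀ K, IsIdeal κ K → (∀ Y, S Y → K Y) → K X

/-- Membership in the pleasant closure of `S` (smallest pleasant ideal containing `S`). -/
def PClosure (κ : Cardinal.{0}) (S : Set Ordinal.{0} → Prop) (X : Set Ordinal.{0}) : Prop :=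
  ∀ K, IsIdeal κ K → Pleasant K → (∀ Y, S Y → K Y) → K X

/-- Membership in the prepleasant closure of `S`. -/
def PPClosure (κ : Cardinal.{0}) (S : Set Ordinal.{0} → Prop) (X : Set Ordinal.{0}) : Prop :=
  ∀ K, IsIdeal κ K → Prepleasant κ K → (∀ Y, S Y → K Y) → K X

/-- p-point. -/
def PPoint (κ : Cardinal.{0}) (J : Set Ordinal.{0} → Prop) : Prop :=
  ∀ f : Ordinal.{0} → Ordinal.{0}, (∀ ξ : Ordinal.{0}, J {α | α < κ.ord ∧ f α = ξ}) →
    ∃ X, Dual κ J X ∧ ∀ ξ : Ordinal.{0}, BddIn κ {α | α ∈ X ∧ f α = ξ}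

/-- q-point. -/
def QPoint (κ : Cardinal.{0}) (J : Set Ordinal.{0} → Prop) : Prop :=
  ∀ f : Ordinal.{0} → Ordinal.{0}, (∀ ξ : Ordinal.{0}, BddIn κ {α | α < κ.ord ∧ f α = ξ}) →
    ∃ X, Dual κ J X ∧ Set.InjOn f X

/-- `L = {λ + 1 : λ < κ a limit ordinal}`. -/
def LSet (κ : Cardinal.{0}) : Set Ordinal.{0} :=
  {x | ∃ lam : Ordinal.{0}, Order.IsSuccLimit lam ∧ x = lam + 1 ∧ x < κ.ord}

/-- `B(Y) = {α - 1 : α ∈ Y}` for a set `Y` of successor ordinals. -/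
def BSet (Y : Set Ordinal.{0}) : Set Ordinal.{0} := {γ | γ + 1 ∈ Y}

/-- `W = {λ < κ : cof λ = ω}`. -/
def WSet (κ : Cardinal.{0}) : Set Ordinal.{0} :=
  {lam | lam < κ.ord ∧ lam.cof = Cardinal.aleph0}

/-- Węglorz's ideal `J_κ`. -/
def Weglorz (κ : Cardinal.{0}) (X : Set Ordinal.{0}) : Prop :=
  X ⊆ Iio κ.ord ∧ ∃ (f : Ordinal.{0} → Ordinal.{0}) (θ : Cardinal.{0}), θ < κ ∧
    (∀ α ∈ X, α ≠ 0 → f α < α) ∧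
    ∀ ξ : Ordinal.{0}, Cardinal.mk {α : Ordinal.{0} // α ∈ X ∧ f α = ξ} ≤ Cardinal.lift.{1} θ

/-! ### Auxiliary club combinatorics -/

section Clubs

variable {κ : Cardinal.{0}}

lemma natSup_isLimit {f : ℕ → Ordinal.{0}} (hf : ∀ n, f n < f (n + 1)) :
    Order.IsSuccLimit (⨆ n, f n) := by
  rw [Ordinal.isSuccLimit_iff, Order.isSuccPrelimit_iff_succ_lt]
  constructor
  · intro h0
    have h1 : f 1 ≤ ⨆ n, f n := Ordinal.le_iSup f 1
    rw [h0] at h1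
    exact absurd (((zero_le : (0 : Ordinal.{0}) ≤ f 0)).trans_lt (hf 0)) (by simpa using h1)
  · intro a ha
    obtain ⟨n, hn⟩ := Ordinal.lt_iSup_iff.mp ha
    have h1 : Order.succ a ≤ f n := Order.succ_le_of_lt hn
    exact h1.trans_lt ((hf n).trans_le (Ordinal.le_iSup f (n + 1)))

lemma natSup_lt_ord (hreg : κ.IsRegular) (hunc : Cardinal.aleph0 < κ)
    {f : ℕ → Ordinal.{0}} (hf : ∀ n, f n < κ.ord) : (⨆ n, f n) < κ.ord := by
  apply Ordinal.iSup_lt_ord _ hf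
  rw [hreg.cof_eq, Cardinal.mk_nat]
  exact hunc

lemma f_mono {f : ℕ → Ordinal.{0}} (hf : ∀ n, f n < f (n + 1)) :
    ∀ {m n : ℕ}, m ≤ n → f m ≤ f n := by
  intro m n h
  induction n with
  | zero => simp_all
  | succ k ih =>
    rcases Nat.lt_or_ge m (k + 1) with h' | h'
    · exact (ih (Nat.lt_succ_iff.mp h')).trans (hf k).le
    · have : m = k + 1 := le_antisymm h h'
      simp [this]

/-- Unboundedness of an intersection of fewer than `κ` clubs. -/
lemma interUnbounded (hreg : κ.IsRegular) (hunc : Cardinal.aleph0 < κ)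
    (θ : Ordinal.{0}) (hθ : θ < κ.ord) (C : Ordinal.{0} → Set Ordinal.{0})
    (hC : ∀ γ, IsClubIn κ (C γ)) :
    ∀ α < κ.ord, ∃ β, α < β ∧ β < κ.ord ∧ ∀ γ < θ, β ∈ C γ := by
  intro α hα
  have hord : Order.IsSuccLimit κ.ord := Cardinal.isSuccLimit_ord hreg.aleph0_le
  -- pick an element of `C γ` above `β`
  let e : Ordinal.{0} → Ordinal.{0} → Ordinal.{0} := fun γ β =>
    if h : β < κ.ord then Classical.choose ((hC γ).2.1 β h) else 0
  have he : ∀ γ β, β < κ.ord → e γ β ∈ C γ ∧ β < e γ β := by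
    intro γ β h
    have hs := Classical.choose_spec ((hC γ).2.1 β h)
    simpa [e, h] using hs
  have heK : ∀ γ β, e γ β < κ.ord := by
    intro γ β
    by_cases h : β < κ.ord
    · exact (hC γ).1 (he γ β h).1
    · simpa [e, h] using hord.pos
  -- the step function
  let step : Ordinal.{0} → Ordinal.{0} := fun β =>
    max (β + 1) (Ordinal.bsup θ (fun γ _ => e γ β))
  have hstep_gt : ∀ β, β < step β := fun β =>
    lt_of_lt_of_le (Order.lt_succ β) (by simp [step])
  have hstep_lt : ∀ β, β < κ.ord → step β < κ.ord := by
    intro β hβ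
    apply max_lt (hord.succ_lt hβ)
    apply Ordinal.bsup_lt_ord _ (fun i hi => heK i β)
    rw [hreg.cof_eq]
    exact Cardinal.lt_ord.mp hθ
  have hstep_e : ∀ β, β < κ.ord → ∀ γ < θ, e γ β ≤ step β := by
    intro β hβ γ hγ
    exact le_trans (Ordinal.le_bsup _ γ hγ) (le_max_right _ _)
  -- the iteration
  let f : ℕ → Ordinal.{0} := fun n => Nat.rec (α + 1) (fun _ ih => step ih) n
  have hf0 : f 0 = α + 1 := rfl
  have hfs : ∀ n, f (n + 1) = step (f n) := fun n => rfl
  have hfmono : ∀ n, f n < f (n + 1) := fun n => by rw [hfs]; exact hstep_gt _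
  have hfK : ∀ n, f n < κ.ord := by
    intro n
    induction n with
    | zero => exact hord.succ_lt hα
    | succ k ih => rw [hfs]; exact hstep_lt _ ih
  refine ⟨⨆ n, f n, ?_, natSup_lt_ord hreg hunc hfK, ?_⟩
  · exact lt_of_lt_of_le (Order.lt_succ α) ((Ordinal.le_iSup f 0).trans_eq' rfl)
  · intro γ hγ
    apply (hC γ).2.2 _ (natSup_lt_ord hreg hunc hfK) (natSup_isLimit hfmono)
    intro ζ hζ
    obtain ⟨n, hn⟩ := Ordinal.lt_iSup_iff.mp hζ
    refine ⟨e γ (f n), (he γ (f n) (hfK n)).1, ?_, ?_⟩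
    · exact hn.trans (he γ (f n) (hfK n)).2
    · have h1 : e γ (f n) ≤ f (n + 1) := by rw [hfs]; exact hstep_e _ (hfK n) γ hγ
      exact lt_of_le_of_lt h1 ((hfmono (n+1)).trans_le (Ordinal.le_iSup f (n + 2)))

/-- Intersection of fewer than `κ` clubs is club. -/
lemma interClub (hreg : κ.IsRegular) (hunc : Cardinal.aleph0 < κ)
    (θ : Ordinal.{0}) (hθ : θ < κ.ord) (C : Ordinal.{0} → Set Ordinal.{0})
    (hC : ∀ γ, IsClubIn κ (C γ)) :
    IsClubIn κ (Iio κ.ord ∩ ⋂ γ ∈ Iio θ, C γ) := by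
  refine ⟨inter_subset_left, ?_, ?_⟩
  · intro α hα
    obtain ⟨β, h1, h2, h3⟩ := interUnbounded hreg hunc θ hθ C hC α hα
    exact ⟨β, ⟨h2, by simpa using h3⟩, h1⟩
  · intro δ hδ hlim happ
    refine ⟨hδ, ?_⟩
    simp only [mem_iInter, mem_Iio]
    intro γ hγ
    apply (hC γ).2.2 _ hδ hlim
    intro α hα
    obtain ⟨β, ⟨_, hβ2⟩, hβ3, hβ4⟩ := happ α hα
    simp only [mem_iInter, mem_Iio] at hβ2
    exact ⟨β, hβ2 γ hγ, hβ3, hβ4⟩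

/-- Intersection of two clubs is club. -/
lemma interClub2 (hreg : κ.IsRegular) (hunc : Cardinal.aleph0 < κ)
    {C₁ C₂ : Set Ordinal.{0}} (h₁ : IsClubIn κ C₁) (h₂ : IsClubIn κ C₂) :
    IsClubIn κ (C₁ ∩ C₂) := by
  have hord : Order.IsSuccLimit κ.ord := Cardinal.isSuccLimit_ord hreg.aleph0_le
  have h2κ : (2 : Ordinal.{0}) < κ.ord := by
    have := Ordinal.natCast_lt_of_isSuccLimit hord 2
    simpa using this
  have key := interClub hreg hunc 2 h2κ (fun γ => if γ = 0 then C₁ else C₂)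
    (fun γ => by split <;> assumption)
  have heq : (Iio κ.ord ∩ ⋂ γ ∈ Iio (2 : Ordinal.{0}),
      (if γ = 0 then C₁ else C₂)) ⊆ C₁ ∩ C₂ := by
    intro x hx
    have hx0 := mem_iInter₂.mp hx.2 0 (by norm_num)
    have hx1 := mem_iInter₂.mp hx.2 1 (by norm_num)
    simp only [if_pos rfl] at hx0
    rw [if_neg one_ne_zero] at hx1
    exact ⟨hx0, hx1⟩
  refine ⟨fun x hx => h₁.1 hx.1, ?_, ?_⟩
  · intro α hα
    obtain ⟨β, hβ1, hβ2⟩ := key.2.1 α hα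
    exact ⟨β, heq hβ1, hβ2⟩
  · intro δ hδ hlim happ
    refine ⟨h₁.2.2 δ hδ hlim ?_, h₂.2.2 δ hδ hlim ?_⟩ <;>
    · intro α hα
      obtain ⟨β, hβ1, hβ2, hβ3⟩ := happ α hα
      exact ⟨β, by simp_all [Set.mem_inter_iff], hβ2, hβ3⟩

/-- `Iio κ.ord` is club. -/
lemma fullClub (hreg : κ.IsRegular) : IsClubIn κ (Iio κ.ord) := by
  have hord : Order.IsSuccLimit κ.ord := Cardinal.isSuccLimit_ord hreg.aleph0_le
  exact ⟨le_refl _, fun α hα => ⟨α + 1, hord.succ_lt hα, Order.lt_succ α⟩,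
    fun δ hδ _ _ => hδ⟩

/-- Final segments are club. -/
lemma tailClub (hreg : κ.IsRegular) (θ : Ordinal.{0}) (hθ : θ < κ.ord) :
    IsClubIn κ (Iio κ.ord ∩ Ioi θ) := by
  have hord : Order.IsSuccLimit κ.ord := Cardinal.isSuccLimit_ord hreg.aleph0_le
  refine ⟨inter_subset_left, ?_, ?_⟩
  · intro α hα
    refine ⟨max α θ + 1, ⟨hord.succ_lt (max_lt hα hθ), ?_⟩, ?_⟩
    · exact lt_of_le_of_lt (le_max_right α θ) (Order.lt_succ _)
    · exact lt_of_le_of_lt (le_max_left α θ) (Order.lt_succ _)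
  · intro δ hδ hlim happ
    obtain ⟨β, ⟨_, hβ2⟩, _, hβ4⟩ := happ 0 hlim.pos
    exact ⟨hδ, hβ2.trans hβ4⟩

/-- Diagonal intersection of clubs is club. -/
lemma diagClub (hreg : κ.IsRegular) (hunc : Cardinal.aleph0 < κ)
    (C : Ordinal.{0} → Set Ordinal.{0}) (hC : ∀ γ, IsClubIn κ (C γ)) :
    IsClubIn κ {γ : Ordinal.{0} | γ < κ.ord ∧ ∀ α < γ, γ ∈ C α} := by
  have hord : Order.IsSuccLimit κ.ord := Cardinal.isSuccLimit_ord hreg.aleph0_le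
  refine ⟨fun x hx => hx.1, ?_, ?_⟩
  · -- unboundedness
    intro α hα
    let step : Ordinal.{0} → Ordinal.{0} := fun β =>
      if h : β < κ.ord then Classical.choose (interUnbounded hreg hunc β h C hC β h) else 0
    have hstep : ∀ β, β < κ.ord →
        β < step β ∧ step β < κ.ord ∧ ∀ γ < β, step β ∈ C γ := by
      intro β h
      have hs := Classical.choose_spec (interUnbounded hreg hunc β h C hC β h)
      simpa [step, h] using hs
    let f : ℕ → Ordinal.{0} := fun n => Nat.rec (α + 1) (fun _ ih => step ih) n
    have hfs : ∀ n, f (n + 1) = step (f n) := fun n => rfl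
    have hfK : ∀ n, f n < κ.ord := by
      intro n
      induction n with
      | zero => exact hord.succ_lt hα
      | succ k ih => rw [hfs]; exact (hstep _ ih).2.1
    have hfmono : ∀ n, f n < f (n + 1) := fun n => by
      rw [hfs]; exact (hstep _ (hfK n)).1
    have hδK : (⨆ n, f n) < κ.ord := natSup_lt_ord hreg hunc hfK
    have hδlim := natSup_isLimit hfmono
    refine ⟨⨆ n, f n, ⟨hδK, ?_⟩, ?_⟩
    · intro γ hγ
      obtain ⟨n, hn⟩ := Ordinal.lt_iSup_iff.mp hγ
      apply (hC γ).2.2 _ hδK hδlim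
      intro ζ hζ
      obtain ⟨m, hm⟩ := Ordinal.lt_iSup_iff.mp hζ
      refine ⟨f (max n m + 1), ?_, ?_, ?_⟩
      · rw [hfs]
        exact (hstep _ (hfK (max n m))).2.2 γ
          (hn.trans_le (f_mono hfmono (Nat.le_max_left n m)))
      · exact lt_of_lt_of_le (hm.trans_le (f_mono hfmono (Nat.le_max_right n m)))
          (f_mono hfmono (Nat.le_succ _))
      · exact lt_of_lt_of_le (hfmono (max n m + 1)) (Ordinal.le_iSup f (max n m + 2))
    · exact lt_of_lt_of_le (Order.lt_succ α) ((Ordinal.le_iSup f 0).trans_eq' rfl)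
  · -- closedness
    intro δ hδ hlim happ
    refine ⟨hδ, ?_⟩
    intro α hα
    apply (hC α).2.2 _ hδ hlim
    intro ζ hζ
    obtain ⟨β, ⟨_, hβ2⟩, hβ3, hβ4⟩ := happ (max α ζ) (max_lt hα hζ)
    refine ⟨β, hβ2 α (lt_of_le_of_lt (le_max_left α ζ) hβ3), ?_, hβ4⟩
    exact lt_of_le_of_lt (le_max_right α ζ) hβ3

end Clubs

/-! ### The witnessing ideal -/

/-- The trace of `X` on ordinals of uncountable cofinality (including via successors). -/
def Tr (X : Set Ordinal.{0}) : Set Ordinal.{0} :=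
  {l | Cardinal.aleph0 < l.cof ∧ (l ∈ X ∨ l + 1 ∈ X)}

lemma Tr_mono {X Y : Set Ordinal.{0}} (h : Y ⊆ X) : Tr Y ⊆ Tr X := by
  rintro l ⟨h1, h2 | h2⟩
  · exact ⟨h1, Or.inl (h h2)⟩
  · exact ⟨h1, Or.inr (h h2)⟩

/-- The witnessing ideal: sets whose trace on uncountable-cofinality points
is nonstationary. -/
def KId (κ : Cardinal.{0}) (X : Set Ordinal.{0}) : Prop :=
  X ⊆ Iio κ.ord ∧ ∃ C, IsClubIn κ C ∧ Tr X ∩ C = ∅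

lemma KId_isIdeal {κ : Cardinal.{0}} (hreg : κ.IsRegular)
    (hunc : Cardinal.aleph0 < κ) : IsIdeal κ (KId κ) := by
  refine ⟨fun X hX => hX.1, ?_, ?_, ?_, ?_⟩
  · -- subsets
    rintro X Y ⟨hX1, C, hC, hdisj⟩ hYX
    refine ⟨hYX.trans hX1, C, hC, ?_⟩
    apply subset_empty_iff.mp
    calc Tr Y ∩ C ⊆ Tr X ∩ C := inter_subset_inter_left C (Tr_mono hYX)
    _ = ∅ := hdisj
  · -- binary unions
    rintro X Y ⟨hX1, C, hC, hdisj⟩ ⟨hY1, D, hD, hdisj'⟩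
    refine ⟨union_subset hX1 hY1, C ∩ D, interClub2 hreg hunc hC hD, ?_⟩
    apply eq_empty_iff_forall_notMem.mpr
    rintro l ⟨⟨h1, h2⟩, hC', hD'⟩
    rcases h2 with (h2 | h2) | (h2 | h2)
    · exact eq_empty_iff_forall_notMem.mp hdisj l ⟨⟨h1, Or.inl h2⟩, hC'⟩
    · exact eq_empty_iff_forall_notMem.mp hdisj' l ⟨⟨h1, Or.inl h2⟩, hD'⟩
    · exact eq_empty_iff_forall_notMem.mp hdisj l ⟨⟨h1, Or.inr h2⟩, hC'⟩
    · exact eq_empty_iff_forall_notMem.mp hdisj' l ⟨⟨h1, Or.inr h2⟩, hD'⟩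
  · -- singletons
    intro ξ hξ
    refine ⟨by simpa using hξ, Iio κ.ord ∩ Ioi ξ, tailClub hreg ξ hξ, ?_⟩
    apply eq_empty_iff_forall_notMem.mpr
    rintro l ⟨⟨h1, h2 | h2⟩, _, h4⟩
    · rw [mem_singleton_iff] at h2; subst h2; exact lt_irrefl l h4
    · rw [mem_singleton_iff] at h2
      have : l < ξ := h2 ▸ Order.lt_succ l
      exact absurd h4 (not_lt.mpr this.le)
  · -- small unions
    intro θ hθ X hX
    choose hX1 C hC hdisj using hX
    have hθ' : θ < κ.ord := Cardinal.lt_ord.mpr hθ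
    refine ⟨?_, Iio κ.ord ∩ ⋂ γ ∈ Iio θ, C γ, interClub hreg hunc θ hθ' C hC, ?_⟩
    · intro x hx
      simp only [mem_iUnion] at hx
      obtain ⟨γ, _, hx⟩ := hx
      exact hX1 γ hx
    · apply eq_empty_iff_forall_notMem.mpr
      rintro l ⟨⟨h1, h2⟩, _, h4⟩
      simp only [mem_iInter, mem_Iio] at h4
      have : ∃ γ < θ, l ∈ X γ ∨ l + 1 ∈ X γ := by
        rcases h2 with h2 | h2 <;>
        · simp only [mem_iUnion, mem_Iio] at h2
          obtain ⟨γ, hγ, hl⟩ := h2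
          exact ⟨γ, hγ, by tauto⟩
      obtain ⟨γ, hγ, hl⟩ := this
      exact eq_empty_iff_forall_notMem.mp (hdisj γ) l ⟨⟨h1, hl⟩, h4 γ hγ⟩

lemma KId_pleasant {κ : Cardinal.{0}} (hreg : κ.IsRegular)
    (hunc : Cardinal.aleph0 < κ) : Pleasant (KId κ) := by
  rintro Q ⟨hQ1, CQ, hCQ, hQdisj⟩ X hX
  choose hX1 C hC hdisj using hX
  refine ⟨?_, CQ ∩ {γ : Ordinal.{0} | γ < κ.ord ∧ ∀ α < γ, γ ∈ C α},
    interClub2 hreg hunc hCQ (diagClub hreg hunc C hC), ?_⟩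
  · rintro ξ ⟨α, _, _, hξ⟩
    exact hX1 α hξ
  · apply eq_empty_iff_forall_notMem.mpr
    rintro l ⟨⟨h1, h2⟩, hCQ', _, hΔ⟩
    rcases h2 with h2 | h2
    · obtain ⟨α, hαl, hαQ, hlX⟩ := h2
      exact eq_empty_iff_forall_notMem.mp (hdisj α) l ⟨⟨h1, Or.inl hlX⟩, hΔ α hαl⟩
    · obtain ⟨α, hαl, hαQ, hlX⟩ := h2
      rcases lt_or_eq_of_le (Order.lt_succ_iff.mp (by
        rwa [← Ordinal.add_one_eq_succ] : α < Order.succ l)) with hlt | heq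
      · exact eq_empty_iff_forall_notMem.mp (hdisj α) l ⟨⟨h1, Or.inr hlX⟩, hΔ α hlt⟩
      · exact eq_empty_iff_forall_notMem.mp hQdisj l ⟨⟨h1, Or.inl (heq ▸ hαQ)⟩, hCQ'⟩

lemma KId_gens {κ : Cardinal.{0}} (hreg : κ.IsRegular) (_hunc : Cardinal.aleph0 < κ) :
    ∀ Y, (BddIn κ Y ∨ Y = WSet κ) → KId κ Y := by
  rintro Y (⟨θ, hθ, hY⟩ | rfl)
  · refine ⟨fun x hx => (hY hx).trans hθ, Iio κ.ord ∩ Ioi θ, tailClub hreg θ hθ, ?_⟩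
    apply eq_empty_iff_forall_notMem.mpr
    rintro l ⟨⟨h1, h2 | h2⟩, _, h4⟩
    · exact absurd h4 (not_lt.mpr (mem_Iio.mp (hY h2)).le)
    · have h2' : l + 1 < θ := mem_Iio.mp (hY h2)
      have : l < θ := lt_trans (by rw [Ordinal.add_one_eq_succ]; exact Order.lt_succ l) h2'
      exact absurd h4 (not_lt.mpr this.le)
  · refine ⟨fun x hx => hx.1, Iio κ.ord, fullClub hreg, ?_⟩
    apply eq_empty_iff_forall_notMem.mpr
    rintro l ⟨⟨h1, h2 | h2⟩, _⟩
    · exact absurd h2.2 (ne_of_gt h1)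
    · have h2' : (l + 1).cof = Cardinal.aleph0 := h2.2
      rw [Ordinal.add_one_eq_succ, Ordinal.cof_succ] at h2'
      exact absurd h2' (ne_of_lt Cardinal.one_lt_aleph0)

/-- If `A ⊆ L \ {λ+1 : λ ∈ W}` and `B(A)` is stationary, then `A` is not in the
pleasant closure of the ideal generated by `I_κ ∪ {W}`. -/
theorem stmt17 (κ : Cardinal.{0}) (hreg : κ.IsRegular) (hunc : Cardinal.aleph0 < κ)
    (A : Set Ordinal.{0})
    (hA : A ⊆ LSet κ \ {x | ∃ lam ∈ WSet κ, x = lam + 1})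
    (hB : StatIn κ (BSet A)) :
    ¬ PClosure κ (fun X => BddIn κ X ∨ X = WSet κ) A := by
  intro h
  obtain ⟨_, C, hC, hdisj⟩ :=
    h (KId κ) (KId_isIdeal hreg hunc) (KId_pleasant hreg hunc) (KId_gens hreg hunc)
  obtain ⟨γ, hγA, hγC⟩ := hB.2 C hC
  -- `γ ∈ BSet A` means `γ + 1 ∈ A`
  have hγA' : γ + 1 ∈ A := hγA
  obtain ⟨⟨lam, hlim, heq, hlt⟩, hnot⟩ := hA hγA'
  have hγlam : γ = lam := by
    rw [Ordinal.add_one_eq_succ, Ordinal.add_one_eq_succ] at heq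
    exact Order.succ_eq_succ_iff.mp heq
  have hγlim : Order.IsSuccLimit γ := hγlam ▸ hlim
  have hγκ : γ < κ.ord := lt_trans (Order.lt_succ γ)
    (by rw [← Ordinal.add_one_eq_succ]; exact heq ▸ hlt)
  have hcof : Cardinal.aleph0 < γ.cof := by
    rcases lt_or_eq_of_le (Ordinal.aleph0_le_cof.mpr hγlim) with h' | h'
    · exact h'
    · exact absurd ⟨γ, ⟨hγκ, h'.symm⟩, rfl⟩ hnot
  exact eq_empty_iff_forall_notMem.mp hdisj γ ⟨⟨hcof, Or.inr hγA'⟩, hγC⟩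

end PaperIdeals
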